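/- Let (v_τ)_{τ ≥ 0} and (λ_t)_{t ≥ 1} be sequences of non-negative reals, and let (S_τ)_{τ ≥ 0} be a non-decreasing sequence of reals with S_0 ≥ v_0². Suppose that for every τ ≥ 1, v_τ² ≤ S_τ + ∑_{t=1}^τ λ_t v_t. Then for every τ ≥ 1, v_τ ≤ (1/2)∑_{t=1}^τ λ_t + ( S_τ + ((1/2)∑_{t=1}^τ λ_t)² )^{1/2}. -/

import Mathlib

theorem stmt17 (v : ℕ → ℝ) (hv : ∀ τ, 0 ≤ v τ)
    (lam : ℕ → ℝ) (hlam : ∀ t, 1 ≤ t → 0 ≤ lam t)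
    (S : ℕ → ℝ) (hS : Monotone S) (hS0 : v 0 ^ 2 ≤ S 0)
    (hrec : ∀ τ, 1 ≤ τ → v τ ^ 2 ≤ S τ + ∑ t ∈ Finset.Icc 1 τ, lam t * v t) :
    ∀ τ, 1 ≤ τ →
      v τ ≤ (1 / 2) * ∑ t ∈ Finset.Icc 1 τ, lam t +
        Real.sqrt (S τ + ((1 / 2) * ∑ t ∈ Finset.Icc 1 τ, lam t) ^ 2) := by
  intro τ hτ
  obtain ⟨m, hmF, hmax⟩ := Finset.exists_max_image (Finset.Icc 0 τ) v ⟨0, by simp⟩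
  have hmτ : m ≤ τ := (Finset.mem_Icc.mp hmF).2
  set L : ℝ := (1/2) * ∑ t ∈ Finset.Icc 1 τ, lam t with hL
  have hsum : (0:ℝ) ≤ ∑ t ∈ Finset.Icc 1 τ, lam t :=
    Finset.sum_nonneg fun t ht => hlam t (Finset.mem_Icc.mp ht).1
  have hLnn : 0 ≤ L := by rw [hL]; linarith
  have hSnn : 0 ≤ S τ :=
    le_trans (le_trans (sq_nonneg _) hS0) (hS (Nat.zero_le τ))
  have key : v m ^ 2 ≤ S τ + 2 * L * v m := by
    rcases Nat.eq_zero_or_pos m with h0 | hpos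
    · subst h0
      have h1 : v 0 ^ 2 ≤ S τ := le_trans hS0 (hS (Nat.zero_le τ))
      nlinarith [hv 0]
    · calc v m ^ 2 ≤ S m + ∑ t ∈ Finset.Icc 1 m, lam t * v t := hrec m hpos
        _ ≤ S τ + ∑ t ∈ Finset.Icc 1 τ, lam t * v m := by
            apply add_le_add (hS hmτ)
            calc ∑ t ∈ Finset.Icc 1 m, lam t * v t
                ≤ ∑ t ∈ Finset.Icc 1 m, lam t * v m := by
                  apply Finset.sum_le_sum
                  intro t ht
                  have ht' := Finset.mem_Icc.mp ht
                  exact mul_le_mul_of_nonneg_left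
                    (hmax t (Finset.mem_Icc.mpr ⟨Nat.zero_le _, le_trans ht'.2 hmτ⟩))
                    (hlam t ht'.1)
              _ ≤ ∑ t ∈ Finset.Icc 1 τ, lam t * v m := by
                  apply Finset.sum_le_sum_of_subset_of_nonneg
                  · exact Finset.Icc_subset_Icc_right hmτ
                  · intro t ht _
                    exact mul_nonneg (hlam t (Finset.mem_Icc.mp ht).1) (hv m)
        _ = S τ + 2 * L * v m := by
            rw [hL, ← Finset.sum_mul]; ring
  have h2 : (v m - L) ^ 2 ≤ S τ + L ^ 2 := by nlinarith [key]
  have h3 : v m - L ≤ Real.sqrt (S τ + L ^ 2) :=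
    calc v m - L ≤ |v m - L| := le_abs_self _
      _ = Real.sqrt ((v m - L) ^ 2) := (Real.sqrt_sq_eq_abs _).symm
      _ ≤ Real.sqrt (S τ + L ^ 2) := Real.sqrt_le_sqrt h2
  have hvτ : v τ ≤ v m := hmax τ (Finset.mem_Icc.mpr ⟨Nat.zero_le _, le_refl _⟩)
  linarith
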